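/- Let ζ : ℝ≥0 → ℝ≥0 be a gauge that is regularly varying at 0 with index D = 0 (i.e., lim_{r→0} ζ(λr)/ζ(r) = 1 for all λ > 0, ζ monotone nondecreasing, ζ(r)>0 for r>0, ζ(0)=0). If Φ : (X,ρ) → (Y,d) is bi-Lipschitz onto its image, then the Carathéodory outer measures satisfy k_ζ(Φ(A)) = k_ζ(A) for all A ⊆ X, provided additionally that for every ε>0 and all sufficiently small r, r' with r ≤ e^C r' one has ζ(r) ≤ e^ε ζ(r'). In simplified form: if k_ζ is the gauge measure with ζ(r) = 1/log(1/r) (for small r), then k_ζ(Φ(A)) = k_ζ(A) for every bi-Lipschitz Φ. -/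

import Mathlib

open EMetric Set MeasureTheory

/-- `OuterMeasure.mkMetric` formula (outer-measure version of `Measure.mkMetric_apply`). -/
theorem myOuter_mkMetric_apply {X : Type*} [MetricSpace X] (m : ENNReal → ENNReal) (s : Set X) :
    MeasureTheory.OuterMeasure.mkMetric m s =
      ⨆ (r : ENNReal) (_ : 0 < r),
        ⨅ (t : ℕ → Set X) (_ : s ⊆ iUnion t) (_ : ∀ n, diam (t n) ≤ r),
          ∑' n, ⨆ _ : (t n).Nonempty, m (diam (t n)) := by
  borelize X
  rw [show (OuterMeasure.mkMetric m : OuterMeasure X) s = Measure.mkMetric m s from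
    congrFun (OuterMeasure.coe_mkMetric m) s]
  exact Measure.mkMetric_apply m s

/-- Generic comparison lemma: if a transformation `T` on sets maps covers of `A` to covers
of `B`, expands diameters by at most `K`, and `ζ (K * s) ≤ a * ζ s` for small `s`, then
`mkMetric ζ B ≤ a * mkMetric ζ A`. -/
theorem my_mkMetric_le {W Z : Type*} [MetricSpace W] [MetricSpace Z]
    (ζ : ENNReal → ENNReal) (hmono : Monotone ζ)
    (K a r₀ : ENNReal) (hKT : K ≠ ⊤) (ha0 : a ≠ 0) (haT : a ≠ ⊤)
    (hr₀ : 0 < r₀) (hKa : ∀ s : ENNReal, s ≤ r₀ → ζ (K * s) ≤ a * ζ s)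
    (T : Set Z → Set W) (B : Set W) (A : Set Z)
    (hcov : ∀ u : ℕ → Set Z, A ⊆ ⋃ n, u n → B ⊆ ⋃ n, T (u n))
    (hdiam : ∀ s : Set Z, diam (T s) ≤ K * diam s)
    (hne : ∀ s : Set Z, (T s).Nonempty → s.Nonempty) :
    MeasureTheory.OuterMeasure.mkMetric ζ B ≤ a * MeasureTheory.OuterMeasure.mkMetric ζ A := by
  rw [myOuter_mkMetric_apply, myOuter_mkMetric_apply]
  refine iSup₂_le fun r hr => ?_
  set r' : ENNReal := min (r / K) r₀ with hr'def
  have hr'0 : 0 < r' := lt_min (ENNReal.div_pos hr.ne' hKT) hr₀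
  have step : (⨅ (t : ℕ → Set W) (_ : B ⊆ iUnion t) (_ : ∀ n, diam (t n) ≤ r),
        ∑' n, ⨆ _ : (t n).Nonempty, ζ (diam (t n)))
      ≤ a * ⨅ (u : ℕ → Set Z) (_ : A ⊆ iUnion u) (_ : ∀ n, diam (u n) ≤ r'),
        ∑' n, ⨆ _ : (u n).Nonempty, ζ (diam (u n)) := by
    rw [ENNReal.mul_iInf_of_ne ha0 haT]
    refine le_iInf fun u => ?_
    rw [ENNReal.mul_iInf_of_ne ha0 haT]
    refine le_iInf fun hu => ?_
    rw [ENNReal.mul_iInf_of_ne ha0 haT]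
    refine le_iInf fun hu' => ?_
    refine iInf₂_le_of_le (fun n => T (u n)) (hcov u hu) ?_
    refine iInf_le_of_le (fun n => ?_) ?_
    · refine (hdiam (u n)).trans ?_
      calc K * diam (u n) ≤ K * (r / K) :=
            by gcongr; exact (hu' n).trans (min_le_left _ _)
        _ ≤ r := ENNReal.mul_div_le
    · rw [← ENNReal.tsum_mul_left]
      refine ENNReal.tsum_le_tsum fun n => ?_
      refine iSup_le fun hTn => ?_
      have hun := hne _ hTn
      calc ζ (diam (T (u n))) ≤ ζ (K * diam (u n)) := hmono (hdiam _)
        _ ≤ a * ζ (diam (u n)) := hKa _ ((hu' n).trans (min_le_right _ _))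
        _ = a * ⨆ _ : (u n).Nonempty, ζ (diam (u n)) := by rw [iSup_pos hun]
  exact step.trans (by gcongr; exact le_iSup₂_of_le r' hr'0 le_rfl)

/-- The slow-variation property of the gauge `ζ(r) = 1/log(1/r)`: for every finite `K`
and every `a > 1` we have `ζ (K * s) ≤ a * ζ s` for all sufficiently small `s`. -/
theorem my_gauge (ζ : ENNReal → ENNReal) (hmono : Monotone ζ) (h0 : ζ 0 = 0)
    (hζ : ∀ r : ENNReal, 0 < r → r < ENNReal.ofReal (Real.exp (-1)) →
      ζ r = ENNReal.ofReal (1 / Real.log (1 / r.toReal)))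
    (K : ENNReal) (hKT : K ≠ ⊤) (a : ENNReal) (ha1 : 1 < a) (haT : a ≠ ⊤) :
    ∃ r₀ : ENNReal, 0 < r₀ ∧ ∀ s : ENNReal, s ≤ r₀ → ζ (K * s) ≤ a * ζ s := by
  rcases le_or_gt K 1 with hK | hK
  · exact ⟨1, one_pos, fun s _ => (hmono (mul_le_of_le_one_left zero_le hK)).trans
      (le_mul_of_one_le_left zero_le ha1.le)⟩
  have hK0 : K ≠ 0 := (one_pos.trans hK).ne'
  set k : ℝ := K.toReal with hkdef
  have hk1 : 1 < k := by
    have := (ENNReal.toReal_lt_toReal ENNReal.one_ne_top hKT).2 hK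
    simpa using this
  have hk0 : 0 < k := one_pos.trans hk1
  set α : ℝ := a.toReal with hαdef
  have hα1 : 1 < α := by
    have := (ENNReal.toReal_lt_toReal ENNReal.one_ne_top haT).2 ha1
    simpa using this
  have hα0 : 0 < α - 1 := by linarith
  have hlogk : 0 < Real.log k := Real.log_pos hk1
  set δ : ℝ := min (Real.exp (-1) / (2 * k)) (Real.exp (-(α * Real.log k) / (α - 1))) with hδdef
  have hδ0 : 0 < δ := lt_min (div_pos (Real.exp_pos _) (by linarith)) (Real.exp_pos _)
  refine ⟨ENNReal.ofReal δ, by simp [hδ0], fun s hs => ?_⟩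
  rcases eq_or_ne s 0 with rfl | hs0
  · simp [h0]
  have hsT : s ≠ ⊤ := fun h => by simp [h] at hs
  set t : ℝ := s.toReal with htdef
  have ht0 : 0 < t := ENNReal.toReal_pos hs0 hsT
  have htδ : t ≤ δ := by
    have := ENNReal.toReal_mono (by simp) hs
    simpa [ENNReal.toReal_ofReal hδ0.le] using this
  -- basic bounds on δ
  have hδe : δ ≤ Real.exp (-1) / (2 * k) := min_le_left _ _
  have hδ2 : δ ≤ Real.exp (-(α * Real.log k) / (α - 1)) := min_le_right _ _
  have hkδ : k * δ < Real.exp (-1) := by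
    have : k * δ ≤ k * (Real.exp (-1) / (2 * k)) := by nlinarith
    have h2 : k * (Real.exp (-1) / (2 * k)) = Real.exp (-1) / 2 := by
      field_simp
    nlinarith [Real.exp_pos (-1 : ℝ)]
  have hδlt : δ < Real.exp (-1) := by nlinarith
  -- s is small, K * s is small
  have hs_lt : s < ENNReal.ofReal (Real.exp (-1)) :=
    lt_of_le_of_lt hs ((ENNReal.ofReal_lt_ofReal_iff (Real.exp_pos _)).2 hδlt)
  have hKs0 : 0 < K * s := by
    simp [ENNReal.mul_pos_iff, pos_iff_ne_zero, hK0, hs0]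
  have hKsT : K * s ≠ ⊤ := ENNReal.mul_ne_top hKT hsT
  have hKs_toReal : (K * s).toReal = k * t := by
    rw [ENNReal.toReal_mul]
  have hkt : k * t < Real.exp (-1) := by
    have : k * t ≤ k * δ := by nlinarith
    linarith
  have hKs_lt : K * s < ENNReal.ofReal (Real.exp (-1)) := by
    rw [← ENNReal.ofReal_toReal hKsT, hKs_toReal]
    exact (ENNReal.ofReal_lt_ofReal_iff (Real.exp_pos _)).2 hkt
  -- rewrite ζ values
  rw [hζ s (pos_iff_ne_zero.2 hs0) hs_lt, hζ (K * s) hKs0 hKs_lt, hKs_toReal, ← htdef]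
  -- real-number estimates
  set L : ℝ := Real.log (1 / t) with hLdef
  have hL_eq : L = -Real.log t := by rw [hLdef, one_div, Real.log_inv]
  have hlogδ : Real.log δ ≤ -(α * Real.log k) / (α - 1) := by
    calc Real.log δ ≤ Real.log (Real.exp (-(α * Real.log k) / (α - 1))) :=
          Real.log_le_log hδ0 hδ2
      _ = -(α * Real.log k) / (α - 1) := Real.log_exp _
  have hL_ge : α * Real.log k / (α - 1) ≤ L := by
    have h1 : Real.log t ≤ Real.log δ := Real.log_le_log ht0 htδ
    rw [hL_eq]
    have := h1.trans hlogδ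
    rw [neg_div] at this
    linarith
  have hLk : Real.log k < L := by
    have h1 : Real.log k < α * Real.log k / (α - 1) := by
      rw [lt_div_iff₀ hα0]
      nlinarith
    linarith
  have hLpos : 0 < L := hlogk.trans hLk
  have hlog_kt : Real.log (1 / (k * t)) = L - Real.log k := by
    rw [one_div, Real.log_inv, Real.log_mul hk0.ne' ht0.ne', hL_eq]
    ring
  have hdenom : 0 < L - Real.log k := by linarith
  -- the key real inequality
  have hkey : 1 / (L - Real.log k) ≤ α * (1 / L) := by
    rw [mul_one_div, div_le_div_iff₀ hdenom hLpos]
    have hmul := mul_le_mul_of_nonneg_left hL_ge hα0.le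
    have h3 : (α - 1) * (α * Real.log k / (α - 1)) = α * Real.log k := by field_simp
    nlinarith
  -- transfer to ENNReal
  rw [hlog_kt]
  have ha_eq : a = ENNReal.ofReal α := (ENNReal.ofReal_toReal haT).symm
  rw [ha_eq, ← ENNReal.ofReal_mul (by linarith : (0:ℝ) ≤ α)]
  exact ENNReal.ofReal_le_ofReal hkey

/-- for the slowly varying (index `D = 0`) gauge `ζ(r) = 1/log(1/r)`
(for small `r`, with `ζ 0 = 0`, extended monotonically), the associated Carathéodory
outer measure is exactly invariant under bi-Lipschitz maps: `k_ζ(Φ(A)) = k_ζ(A)`. -/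
theorem stmt_16 {X Y : Type*} [MetricSpace X] [MetricSpace Y]
    (ζ : ENNReal → ENNReal) (hmono : Monotone ζ) (h0 : ζ 0 = 0)
    (hζ : ∀ r : ENNReal, 0 < r → r < ENNReal.ofReal (Real.exp (-1)) →
      ζ r = ENNReal.ofReal (1 / Real.log (1 / r.toReal)))
    (f : X → Y) (c C : ℝ) (hc : 0 < c) (hcC : c ≤ C)
    (hlow : ∀ x y : X, c * dist x y ≤ dist (f x) (f y))
    (hup : ∀ x y : X, dist (f x) (f y) ≤ C * dist x y) :
    ∀ A : Set X,
      MeasureTheory.OuterMeasure.mkMetric ζ (f '' A) =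
        MeasureTheory.OuterMeasure.mkMetric ζ A := by
  intro A
  have hC0 : (0:ℝ) < C := hc.trans_le hcC
  have hlip : LipschitzWith C.toNNReal f := by
    refine LipschitzWith.of_dist_le_mul fun x y => ?_
    rw [Real.coe_toNNReal C hC0.le]
    exact hup x y
  have hanti : AntilipschitzWith (c⁻¹).toNNReal f := by
    refine AntilipschitzWith.of_le_mul_dist fun x y => ?_
    rw [Real.coe_toNNReal _ (inv_nonneg.2 hc.le)]
    have := hlow x y
    rw [inv_mul_eq_div, le_div_iff₀ hc]
    linarith
  set K₁ : ENNReal := (C.toNNReal : ENNReal) with hK₁def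
  set K₂ : ENNReal := ((c⁻¹).toNNReal : ENNReal) with hK₂def
  have hK₁T : K₁ ≠ ⊤ := ENNReal.coe_ne_top
  have hK₂T : K₂ ≠ ⊤ := ENNReal.coe_ne_top
  have main : ∀ a : ENNReal, 1 < a → a ≠ ⊤ →
      MeasureTheory.OuterMeasure.mkMetric ζ (f '' A) ≤
        a * MeasureTheory.OuterMeasure.mkMetric ζ A ∧
      MeasureTheory.OuterMeasure.mkMetric ζ A ≤
        a * MeasureTheory.OuterMeasure.mkMetric ζ (f '' A) := by
    intro a ha1 haT
    have ha0 : a ≠ 0 := (one_pos.trans ha1).ne'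
    constructor
    · obtain ⟨r₀, hr₀, hKa⟩ := my_gauge ζ hmono h0 hζ K₁ hK₁T a ha1 haT
      exact my_mkMetric_le ζ hmono K₁ a r₀ hK₁T ha0 haT hr₀ hKa
        (fun s => f '' s) (f '' A) A
        (fun u hu => by rw [← image_iUnion]; exact image_mono hu)
        (fun s => hlip.ediam_image_le s)
        (fun s hs => hs.of_image)
    · obtain ⟨r₀, hr₀, hKa⟩ := my_gauge ζ hmono h0 hζ K₂ hK₂T a ha1 haT
      exact my_mkMetric_le ζ hmono K₂ a r₀ hK₂T ha0 haT hr₀ hKa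
        (fun s => A ∩ f ⁻¹' s) A (f '' A)
        (fun u hu x hx => by
          obtain ⟨n, hn⟩ := mem_iUnion.1 (hu ⟨x, hx, rfl⟩)
          exact mem_iUnion.2 ⟨n, hx, hn⟩)
        (fun s => (diam_mono inter_subset_right).trans (hanti.ediam_preimage_le s))
        (fun s hs => hs.elim fun x hx => ⟨f x, hx.2⟩)
  have half : ∀ u v : ENNReal, (∀ a : ENNReal, 1 < a → a ≠ ⊤ → u ≤ a * v) → u ≤ v := by
    intro u v h
    refine ENNReal.le_of_forall_lt_one_mul_le fun b hb => ?_
    rcases eq_or_ne b 0 with rfl | hb0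
    · simp
    have hbT : b ≠ ⊤ := (hb.trans_le le_top).ne
    have h1 : 1 < b⁻¹ := ENNReal.one_lt_inv.2 hb
    have hiT : b⁻¹ ≠ ⊤ := ENNReal.inv_ne_top.2 hb0
    calc b * u ≤ b * (b⁻¹ * v) := by gcongr; exact h _ h1 hiT
      _ = v := by rw [← mul_assoc, ENNReal.mul_inv_cancel hb0 hbT, one_mul]
  exact le_antisymm (half _ _ fun a h1 h2 => (main a h1 h2).1)
    (half _ _ fun a h1 h2 => (main a h1 h2).2)
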